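/- Let G = D ⋊ M be a soluble finite group such that: D = G^{𝔑_σ} (the σ-nilpotent residual of G) is an abelian Hall subgroup of G of odd order; M is a σ-nilpotent M-group; every element of G induces a power automorphism on D; and for every i, O_{σ_i}(D) has a normal complement in a Hall σ_i-subgroup of G. If A is a σ-primary σ-subnormal subgroup of G with A ≤ M, then D ≤ C_G(A). -/

import Mathlib

open Subgroup
open scoped Pointwise

/-- A partition of the set of all primes into pairwise disjoint nonempty blocks. -/
structure SigmaPartition : Type where
  blocks : Set (Set ℕ)
  nonempty : ∀ s ∈ blocks, s.Nonempty
  mem_prime : ∀ s ∈ blocks, ∀ p ∈ s, p.Prime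
  pairwise_disjoint : ∀ s ∈ blocks, ∀ t ∈ blocks, s ≠ t → Disjoint s t
  covers : ∀ p : ℕ, p.Prime → ∃ s ∈ blocks, p ∈ s

/-- `n` is a σ-primary number: all of its prime divisors lie in a single block of σ. -/
def IsSigmaPrimaryCard (σ : SigmaPartition) (n : ℕ) : Prop :=
  ∃ s ∈ σ.blocks, ∀ p : ℕ, p.Prime → p ∣ n → p ∈ s

/-- A group is σ-primary if all primes dividing its order lie in one block of σ. -/
def IsSigmaPrimary (σ : SigmaPartition) (X : Type*) [Group X] : Prop :=
  IsSigmaPrimaryCard σ (Nat.card X)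

section

variable {G : Type*} [Group G]

/-- A subgroup is modular if it is a modular element (in the sense of Kurosh)
of the lattice of all subgroups. -/
def IsModularSubgroup (M : Subgroup G) : Prop :=
  (∀ X Z : Subgroup G, X ≤ Z → X ⊔ (M ⊓ Z) = (X ⊔ M) ⊓ Z) ∧
  (∀ Y Z : Subgroup G, M ≤ Z → M ⊔ (Y ⊓ Z) = (M ⊔ Y) ⊓ Z)

/-- One step of a σ-subnormal chain: `A ≤ B` and either `A` is normal in `B` or
`B` modulo the normal core of `A` in `B` is σ-primary. -/
def SigmaStep (σ : SigmaPartition) (A B : Subgroup G) : Prop :=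
  A ≤ B ∧ ((A.subgroupOf B).Normal ∨
    IsSigmaPrimaryCard σ (Nat.card (↥B ⧸ (A.subgroupOf B).normalCore)))

/-- `A` is σ-subnormal in the ambient group. -/
def IsSigmaSubnormal (σ : SigmaPartition) (A : Subgroup G) : Prop :=
  ∃ (n : ℕ) (c : Fin (n + 1) → Subgroup G), c 0 = A ∧ c (Fin.last n) = ⊤ ∧
    ∀ i : Fin n, SigmaStep σ (c i.castSucc) (c i.succ)

/-- `A` is σ-quasinormal: σ-subnormal and modular. -/
def IsSigmaQuasinormal (σ : SigmaPartition) (A : Subgroup G) : Prop :=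
  IsSigmaSubnormal σ A ∧ IsModularSubgroup A

/-- `A` is σ-quasinormal in the intermediate subgroup `B`. -/
def IsSigmaQuasinormalIn (σ : SigmaPartition) (A B : Subgroup G) : Prop :=
  A ≤ B ∧ IsSigmaQuasinormal σ (A.subgroupOf B)

/-- `A` is σ-subquasinormal: there is a chain from `A` to the whole group with
each term σ-quasinormal in the next. -/
def IsSigmaSubquasinormal (σ : SigmaPartition) (A : Subgroup G) : Prop :=
  ∃ (n : ℕ) (c : Fin (n + 1) → Subgroup G), c 0 = A ∧ c (Fin.last n) = ⊤ ∧
    ∀ i : Fin n, IsSigmaQuasinormalIn σ (c i.castSucc) (c i.succ)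

/-- `H` is subnormal in the ambient group. -/
def IsSubnormalSubgroup (H : Subgroup G) : Prop :=
  ∃ (n : ℕ) (c : Fin (n + 1) → Subgroup G), c 0 = H ∧ c (Fin.last n) = ⊤ ∧
    ∀ i : Fin n, c i.castSucc ≤ c i.succ ∧ ((c i.castSucc).subgroupOf (c i.succ)).Normal

/-- The factor `H/K` (for `K ≤ H`) is cyclic, elementwise formulation. -/
def IsCyclicFactor (H K : Subgroup G) : Prop :=
  ∃ g ∈ H, ∀ h ∈ H, ∃ n : ℤ, (g ^ n)⁻¹ * h ∈ K

end

/-- `G` is a QσT-group: σ-quasinormality is transitive in `G`. -/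
def IsQSigmaT (σ : SigmaPartition) (G : Type*) [Group G] : Prop :=
  ∀ H K : Subgroup G, H ≤ K →
    IsSigmaQuasinormal σ (H.subgroupOf K) → IsSigmaQuasinormal σ K →
    IsSigmaQuasinormal σ H

/-- `(D, Z; U 1, …, U k)` is a Robinson complex of `G`. -/
def IsRobinsonComplex (G : Type*) [Group G] (D Z : Subgroup G)
    (k : ℕ) (U : Fin k → Subgroup G) : Prop :=
  D ≠ ⊥ ∧ D.Normal ∧ ⁅D, D⁆ = D ∧
  Z = (Subgroup.center ↥D).map D.subtype ∧
  Z = (frattini ↥D).map D.subtype ∧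
  (∀ i, Z ≤ U i ∧ U i ≤ D ∧ (U i).Normal) ∧
  (⨆ i, U i) = D ∧
  (∀ i, U i ⊓ (Z ⊔ ⨆ j ∈ ({j | j ≠ i} : Set (Fin k)), U j) = Z) ∧
  (∀ i, ¬ ⁅U i, U i⁆ ≤ Z) ∧
  (∀ i, ∀ N : Subgroup G, Z ≤ N → N ≤ U i → (N.subgroupOf (U i)).Normal →
    N = Z ∨ N = U i) ∧
  (∀ H K : Subgroup G, H.Normal → K.Normal → K < H → H ≤ Z →
    (∀ N : Subgroup G, N.Normal → K ≤ N → N ≤ H → N = K ∨ N = H) →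
    IsCyclicFactor H K)

/-- The largest normal p-subgroup `O_p(X)`. -/
def pCoreSubgroup (p : ℕ) (X : Type*) [Group X] : Subgroup X :=
  sSup {P : Subgroup X | P.Normal ∧ IsPGroup p ↥P}

/-- `G` satisfies `N_p`: whenever `N` is a soluble normal subgroup of `G`,
p'-elements of `G/N` induce power automorphisms on `O_p(G/N)`. -/
def SatisfiesNp (p : ℕ) (G : Type*) [Group G] : Prop :=
  ∀ (N : Subgroup G) [N.Normal], IsSolvable ↥N →
    ∀ x : G ⧸ N, ¬ p ∣ orderOf x →
      ∀ S : Subgroup (G ⧸ N), S ≤ pCoreSubgroup p (G ⧸ N) →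
        ∀ s ∈ S, x * s * x⁻¹ ∈ S

/-- `G` satisfies `P_p`: whenever `N` is a soluble normal subgroup of `G`,
every subgroup of `O_p(G/N)` is quasinormal in every Sylow p-subgroup of `G/N`. -/
def SatisfiesPp (p : ℕ) (G : Type*) [Group G] : Prop :=
  ∀ (N : Subgroup G) [N.Normal], IsSolvable ↥N →
    ∀ S : Subgroup (G ⧸ N), S ≤ pCoreSubgroup p (G ⧸ N) →
      ∀ P : Sylow p (G ⧸ N), ∀ T : Subgroup (G ⧸ N), T ≤ ↑P →
        (S : Set (G ⧸ N)) * (T : Set (G ⧸ N)) = (T : Set (G ⧸ N)) * (S : Set (G ⧸ N))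

/-- `X` is a non-abelian P-group of type `(p, q)`: `X = A ⋊ ⟨t⟩` with `A` a non-trivial
elementary abelian p-group and `t` of prime order `q ≠ p` inducing a non-trivial power
automorphism on `A`. -/
def IsPGroupOfType (p q : ℕ) (X : Type*) [Group X] : Prop :=
  p.Prime ∧ q.Prime ∧ p ≠ q ∧
  ∃ (A : Subgroup X) (t : X),
    A ≠ ⊥ ∧ (∀ a ∈ A, a ^ p = 1) ∧ (∀ a ∈ A, ∀ b ∈ A, a * b = b * a) ∧
    orderOf t = q ∧ A.Normal ∧ A ⊔ Subgroup.zpowers t = ⊤ ∧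
    A ⊓ Subgroup.zpowers t = ⊥ ∧
    (∀ S : Subgroup X, S ≤ A → ∀ s ∈ S, t * s * t⁻¹ ∈ S) ∧
    ∃ a ∈ A, t * a * t⁻¹ ≠ a

/-- `G` satisfies `Q_{σ(p,q)}`. -/
def SatisfiesQSigmaPQ (σ : SigmaPartition) (p q : ℕ) (G : Type*) [Group G] : Prop :=
  ∀ (N : Subgroup G) [N.Normal], IsSolvable ↥N →
    ∀ P : Subgroup (G ⧸ N), P.Normal → IsSigmaPrimary σ ↥P → IsPGroupOfType p q ↥P →
      ∀ S : Subgroup (G ⧸ N), S ≤ P → IsModularSubgroup S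

/-- `G` satisfies `M_{p,q}`. -/
def SatisfiesMpq (p q : ℕ) (G : Type*) [Group G] : Prop :=
  ∀ (N : Subgroup G) [N.Normal], IsSolvable ↥N →
    ∀ P : Subgroup (G ⧸ N), P.Normal → IsPGroupOfType p q ↥P →
      ∀ S : Subgroup (G ⧸ N), S ≤ P → IsModularSubgroup S

/-- `X` is σ-nilpotent: an internal direct product of σ-primary (normal) subgroups. -/
def IsSigmaNilpotent (σ : SigmaPartition) (X : Type*) [Group X] : Prop :=
  ∃ (n : ℕ) (H : Fin n → Subgroup X),
    (∀ i, (H i).Normal) ∧ (∀ i, IsSigmaPrimary σ ↥(H i)) ∧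
    (⨆ i, H i) = ⊤ ∧
    ∀ i, H i ⊓ (⨆ j ∈ ({j | j ≠ i} : Set (Fin n)), H j) = ⊥

/-- The σ-nilpotent residual `G^{𝔑_σ}`: the smallest normal subgroup of `G`
with σ-nilpotent quotient. -/
def sigmaNilpotentResidual (σ : SigmaPartition) (G : Type*) [Group G] : Subgroup G :=
  sInf {N : Subgroup G | ∃ h : N.Normal, letI := h; IsSigmaNilpotent σ (G ⧸ N)}

/-- `H` is a Hall `s`-subgroup of the ambient group: every prime dividing `|H|`
lies in `s` and no prime dividing the index of `H` lies in `s`. -/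
def IsHallSigmaSubgroup {G : Type*} [Group G] (s : Set ℕ) (H : Subgroup G) : Prop :=
  (∀ p : ℕ, p.Prime → p ∣ Nat.card ↥H → p ∈ s) ∧
  (∀ p : ℕ, p.Prime → p ∣ H.index → p ∉ s)

/-- `O_s(X)`: the largest normal subgroup of `X` all of whose prime divisors lie in `s`. -/
def sigmaCore (s : Set ℕ) (X : Type*) [Group X] : Subgroup X :=
  sSup {P : Subgroup X | P.Normal ∧ ∀ p : ℕ, p.Prime → p ∣ Nat.card ↥P → p ∈ s}


private lemma binom_aux (e : ℤ) : ∀ t : ℕ, e ^ 2 ∣ ((1 + e) ^ t - 1 - (t : ℤ) * e)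
  | 0 => by simp
  | (t+1) => by
    have ih := binom_aux e t
    have h : (1+e)^(t+1) - 1 - ((t:ℕ)+1 : ℤ) * e
        = ((1+e)^t - 1 - (t:ℤ)*e) * (1+e) + (t:ℤ) * e * e := by ring
    have : (1+e)^(t+1) - 1 - (((t+1):ℕ) : ℤ) * e
        = ((1+e)^t - 1 - (t:ℤ)*e) * (1+e) + (t:ℤ) * e * e := by push_cast; ring
    rw [this]
    exact dvd_add (ih.mul_right _) ⟨(t:ℤ), by ring⟩

private lemma conj_pow_iter {G : Type*} [Group G] {a v : G} {k : ℤ}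
    (hk : a * v * a⁻¹ = v ^ k) : ∀ t : ℕ, a ^ t * v * (a ^ t)⁻¹ = v ^ (k ^ t)
  | 0 => by simp
  | (t+1) => by
    have ih := conj_pow_iter hk t
    have h1 : a ^ (t+1) * v * (a ^ (t+1))⁻¹ = a * (a ^ t * v * (a ^ t)⁻¹) * a⁻¹ := by
      rw [pow_succ']; group
    rw [h1, ih, ← conj_zpow, hk, ← zpow_mul]
    congr 1
    rw [pow_succ]
    ring

private lemma orderOf_zpow_dvd' {G : Type*} [Group G] (v : G) (j : ℤ) :
    orderOf (v ^ j) ∣ orderOf v := by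
  apply orderOf_dvd_of_pow_eq_one
  rw [← zpow_natCast, ← zpow_mul, mul_comm, zpow_mul, zpow_natCast, pow_orderOf_eq_one,
    one_zpow]

private lemma key_nt {G : Type*} [Group G] {a v : G} {k : ℤ}
    (hk : a * v * a⁻¹ = v ^ k)
    (hw : a * v ^ (k - 1) * a⁻¹ = v ^ (k - 1))
    (hcop : Nat.Coprime (orderOf a) (orderOf v)) : a * v = v * a := by
  set m : ℤ := (orderOf v : ℤ)
  have hsq : m ∣ (k - 1) ^ 2 := by
    have h1 : a * v ^ (k-1) * a⁻¹ = v ^ (k * (k-1)) := by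
      rw [← conj_zpow, hk, ← zpow_mul]
    have h2 : v ^ (k * (k-1)) = v ^ (k-1) := by rw [← h1, hw]
    have h3 : v ^ (k * (k-1) - (k-1)) = 1 := by
      rw [zpow_sub, h2, mul_inv_cancel]
    rw [← orderOf_dvd_iff_zpow_eq_one] at h3
    have : k * (k-1) - (k-1) = (k-1)^2 := by ring
    rwa [this] at h3
  set t : ℕ := orderOf a
  have hkt : m ∣ k ^ t - 1 := by
    have h1 := conj_pow_iter hk t
    rw [pow_orderOf_eq_one, one_mul, inv_one, mul_one] at h1
    have h2 : v ^ (k ^ t - 1) = 1 := by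
      rw [zpow_sub, ← h1, zpow_one, mul_inv_cancel]
    rwa [← orderOf_dvd_iff_zpow_eq_one] at h2
  have hb := binom_aux (k - 1) t
  have hb' : m ∣ (1 + (k-1)) ^ t - 1 - (t:ℤ) * (k-1) := hsq.trans hb
  have hone : (1 : ℤ) + (k - 1) = k := by ring
  rw [hone] at hb'
  have hte : m ∣ (t:ℤ) * (k-1) := by
    have : (t:ℤ) * (k-1) = (k ^ t - 1) - (k ^ t - 1 - (t:ℤ) * (k-1)) := by ring
    rw [this]
    exact dvd_sub hkt hb'
  have hcop' : IsCoprime m ((t:ℤ)) := by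
    rw [Nat.isCoprime_iff_coprime]
    exact hcop.symm
  have hme : m ∣ (k - 1) := hcop'.dvd_of_dvd_mul_left hte
  have hv1 : v ^ (k - 1) = 1 := orderOf_dvd_iff_zpow_eq_one.1 hme
  have : a * v * a⁻¹ = v := by
    rw [hk]
    have : v ^ k = v ^ (k - 1) * v := by rw [zpow_sub_one]; group
    rw [this, hv1, one_mul]
  calc a * v = (a * v * a⁻¹) * a := by group
  _ = v * a := by rw [this]


private lemma nat_split (s : Set ℕ) (m : ℕ) (hm : m ≠ 0) :
    ∃ m1 m2 : ℕ, m = m1 * m2 ∧ Nat.Coprime m1 m2 ∧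
      (∀ p, p.Prime → p ∣ m1 → p ∈ s) ∧ (∀ p, p.Prime → p ∣ m2 → p ∉ s) := by
  classical
  set m1 := ∏ p ∈ m.primeFactors, if p ∈ s then p ^ m.factorization p else 1 with hm1
  set m2 := ∏ p ∈ m.primeFactors, if p ∈ s then 1 else p ^ m.factorization p with hm2
  have hmul : m1 * m2 = m := by
    rw [hm1, hm2, ← Finset.prod_mul_distrib]
    have h : ∀ p ∈ m.primeFactors,
        (if p ∈ s then p ^ m.factorization p else 1) * (if p ∈ s then 1 else p ^ m.factorization p)
        = p ^ m.factorization p := by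
      intro p _
      by_cases h : p ∈ s <;> simp [h]
    rw [Finset.prod_congr rfl h]
    conv_rhs => rw [← Nat.factorization_prod_pow_eq_self hm]
    rw [Finsupp.prod, Nat.support_factorization]
  have key : ∀ (P : Set ℕ) (q : ℕ), q.Prime →
      q ∣ (∏ p ∈ m.primeFactors, if p ∈ P then p ^ m.factorization p else 1) →
      ∃ p ∈ m.primeFactors, p ∈ P ∧ q = p := by
    intro P q hq hdvd
    obtain ⟨p, hpmem, hpd⟩ := (hq.prime.dvd_finset_prod_iff _).1 hdvd
    by_cases hps : p ∈ P
    · simp only [hps, if_true] at hpd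
      exact ⟨p, hpmem, hps, (Nat.prime_dvd_prime_iff_eq hq
        (Nat.prime_of_mem_primeFactors hpmem)).1 (hq.dvd_of_dvd_pow hpd)⟩
    · simp only [hps, if_false, Nat.dvd_one] at hpd
      exact absurd hpd hq.one_lt.ne'
  have h1 : ∀ p, p.Prime → p ∣ m1 → p ∈ s := by
    intro p pp pd
    obtain ⟨q, _, hq, rfl⟩ := key s p pp pd
    exact hq
  have h2 : ∀ p, p.Prime → p ∣ m2 → p ∉ s := by
    intro p pp pd
    obtain ⟨q, hqmem, hpd⟩ := (pp.prime.dvd_finset_prod_iff _).1 pd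
    by_cases hqs : q ∈ s
    · simp only [hqs, if_true, Nat.dvd_one] at hpd
      exact absurd hpd pp.one_lt.ne'
    · simp only [hqs, if_false] at hpd
      rwa [(Nat.prime_dvd_prime_iff_eq pp
        (Nat.prime_of_mem_primeFactors hqmem)).1 (pp.dvd_of_dvd_pow hpd)]
  refine ⟨m1, m2, hmul.symm, ?_, h1, h2⟩
  by_contra hnc
  obtain ⟨p, pp, pd1, pd2⟩ := Nat.Prime.not_coprime_iff_dvd.1 hnc
  exact h2 p pp pd2 (h1 p pp pd1)

private lemma elt_split {G : Type*} [Group G] [Finite G] (s : Set ℕ) (d : G) :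
    ∃ v w : G, v ∈ Subgroup.zpowers d ∧ w ∈ Subgroup.zpowers d ∧ d = v * w ∧
      (∀ p, p.Prime → p ∣ orderOf v → p ∉ s) ∧ (∀ p, p.Prime → p ∣ orderOf w → p ∈ s) := by
  obtain ⟨m1, m2, hmul, hcop, h1, h2⟩ := nat_split s (orderOf d) (orderOf_pos d).ne'
  obtain ⟨x, y, hxy⟩ := (Nat.isCoprime_iff_coprime.2 hcop)
  have hordv : orderOf (d ^ (y * (m2:ℤ))) ∣ m1 := by
    apply orderOf_dvd_of_pow_eq_one
    rw [← zpow_natCast, ← zpow_mul]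
    have : y * (m2:ℤ) * (m1:ℤ) = ((orderOf d : ℕ) : ℤ) * y := by
      rw [hmul]; push_cast; ring
    rw [this, zpow_mul, zpow_natCast, pow_orderOf_eq_one, one_zpow]
  have hordw : orderOf (d ^ (x * (m1:ℤ))) ∣ m2 := by
    apply orderOf_dvd_of_pow_eq_one
    rw [← zpow_natCast, ← zpow_mul]
    have : x * (m1:ℤ) * (m2:ℤ) = ((orderOf d : ℕ) : ℤ) * x := by
      rw [hmul]; push_cast; ring
    rw [this, zpow_mul, zpow_natCast, pow_orderOf_eq_one, one_zpow]
  refine ⟨d ^ (x * (m1:ℤ)), d ^ (y * (m2:ℤ)),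
    mem_zpowers_iff.2 ⟨_, rfl⟩, mem_zpowers_iff.2 ⟨_, rfl⟩, ?_,
    fun p pp pd => h2 p pp (pd.trans hordw), fun p pp pd => h1 p pp (pd.trans hordv)⟩
  rw [← zpow_add]
  have : x * (m1:ℤ) + y * (m2:ℤ) = 1 := hxy
  rw [this, zpow_one]


section ChainAux
variable {G : Type*} [Group G]

private lemma primaryCard_dvd {σ : SigmaPartition} {m n : ℕ}
    (h : IsSigmaPrimaryCard σ n) (hd : m ∣ n) : IsSigmaPrimaryCard σ m := by
  obtain ⟨s, hs, hp⟩ := h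
  exact ⟨s, hs, fun p pp pd => hp p pp (pd.trans hd)⟩

private lemma sigmaStep_inf (σ : SigmaPartition) (P Q H : Subgroup G)
    (h : SigmaStep σ P Q) : SigmaStep σ (P ⊓ H) (Q ⊓ H) := by
  obtain ⟨hle, hor⟩ := h
  refine ⟨inf_le_inf_right _ hle, ?_⟩
  rcases hor with hn | hc
  · left
    rw [Subgroup.normal_subgroupOf_iff (inf_le_inf_right _ hle)]
    rw [Subgroup.normal_subgroupOf_iff hle] at hn
    intro x y hx hy
    obtain ⟨hx1, hx2⟩ := Subgroup.mem_inf.1 hx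
    obtain ⟨hy1, hy2⟩ := Subgroup.mem_inf.1 hy
    exact Subgroup.mem_inf.2 ⟨hn x y hx1 hy1,
      H.mul_mem (H.mul_mem hy2 hx2) (H.inv_mem hy2)⟩
  · right
    refine primaryCard_dvd hc ?_
    set core1 := (P.subgroupOf Q).normalCore
    set core2 := ((P ⊓ H).subgroupOf (Q ⊓ H)).normalCore
    set f : ↥(Q ⊓ H) →* ↥Q ⧸ core1 :=
      (QuotientGroup.mk' core1).comp (Subgroup.inclusion inf_le_left)
    have hker : f.ker ≤ core2 := by
      rw [Subgroup.normal_le_normalCore]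
      intro x hx
      have hx0 : (QuotientGroup.mk' core1) (Subgroup.inclusion (inf_le_left : Q ⊓ H ≤ Q) x) = 1 := hx
      have hx1 : Subgroup.inclusion (inf_le_left : Q ⊓ H ≤ Q) x ∈ core1 := by
        rwa [QuotientGroup.mk'_apply, QuotientGroup.eq_one_iff] at hx0
      have hx2 := (Subgroup.normalCore_le _) hx1
      rw [Subgroup.mem_subgroupOf] at hx2 ⊢
      exact ⟨hx2, x.2.2⟩
    have h1 : Nat.card (↥(Q ⊓ H) ⧸ core2) ∣ Nat.card (↥(Q ⊓ H) ⧸ f.ker) := by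
      rw [← Subgroup.index_eq_card, ← Subgroup.index_eq_card]
      exact Subgroup.index_dvd_of_le hker
    have h2 : Nat.card (↥(Q ⊓ H) ⧸ f.ker) ∣ Nat.card (↥Q ⧸ core1) :=
      Subgroup.card_dvd_of_injective (QuotientGroup.kerLift f)
        (QuotientGroup.kerLift_injective f)
    exact h1.trans h2

private lemma chain_zero_le {σ : SigmaPartition} {n : ℕ} (c : Fin (n+1) → Subgroup G)
    (h : ∀ i : Fin n, SigmaStep σ (c i.castSucc) (c i.succ)) : ∀ i, c 0 ≤ c i := by
  intro i
  induction i using Fin.induction with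
  | zero => exact le_rfl
  | succ j ihj => exact ihj.trans (h j).1

end ChainAux


private lemma cent (σ : SigmaPartition) {G : Type*} [Group G] [Finite G] (D : Subgroup G)
    (hpower : ∀ g : G, ∀ S : Subgroup G, S ≤ D → ∀ s ∈ S, g * s * g⁻¹ ∈ S)
    (s : Set ℕ) (hs : s ∈ σ.blocks) :
    ∀ n : ℕ, ∀ A B : Subgroup G,
      (∃ c : Fin (n + 1) → Subgroup G, c 0 = A ∧ c (Fin.last n) = B ∧
        ∀ i : Fin n, SigmaStep σ (c i.castSucc) (c i.succ)) →
      (∀ p : ℕ, p.Prime → p ∣ Nat.card A → p ∈ s) →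
      ∀ v : G, v ∈ D → v ∈ B → (∀ p : ℕ, p.Prime → p ∣ orderOf v → p ∉ s) →
      ∀ a ∈ A, a * v = v * a := by
  intro n
  induction n with
  | zero =>
    rintro A B ⟨c, hc0, hcl, -⟩ hA v hvD hvB hvs a ha
    have hAB : A = B := by rw [← hc0, ← hcl, Fin.last_zero]
    have hvA : v ∈ A := hAB ▸ hvB
    have hv1 : orderOf v = 1 := by
      rw [Nat.eq_one_iff_not_exists_prime_dvd]
      intro p pp pd
      exact hvs p pp pd (hA p pp (pd.trans (A.orderOf_dvd_natCard hvA)))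
    rw [orderOf_eq_one_iff.1 hv1, mul_one, one_mul]
  | succ n ih =>
    rintro A B ⟨c, hc0, hcl, hstep⟩ hA v hvD hvB hvs a ha
    set Y := c (Fin.last n).castSucc with hYdef
    have htop : SigmaStep σ Y B := by
      have h := hstep (Fin.last n)
      rwa [Fin.succ_last, hcl] at h
    have hchainY : ∃ c' : Fin (n+1) → Subgroup G, c' 0 = A ∧ c' (Fin.last n) = Y ∧
        ∀ i : Fin n, SigmaStep σ (c' i.castSucc) (c' i.succ) := by
      refine ⟨fun i => c i.castSucc, by rw [← hc0]; congr 1, rfl, fun i => ?_⟩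
      have h := hstep i.castSucc
      rwa [Fin.succ_castSucc] at h
    obtain ⟨c', hc'0, hc'l, hc'step⟩ := hchainY
    have hAY : A ≤ Y := by
      have := chain_zero_le (σ := σ) c' hc'step (Fin.last n)
      rwa [hc'0, hc'l] at this
    have haB : a ∈ B := htop.1 (hAY ha)
    have hvz : a * v * a⁻¹ ∈ Subgroup.zpowers v :=
      hpower a (Subgroup.zpowers v) (Subgroup.zpowers_le.2 hvD) v (Subgroup.mem_zpowers v)
    obtain ⟨k, hk⟩ := Subgroup.mem_zpowers_iff.1 hvz
    have hcop : Nat.Coprime (orderOf a) (orderOf v) := by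
      by_contra hnc
      obtain ⟨p, pp, pd1, pd2⟩ := Nat.Prime.not_coprime_iff_dvd.1 hnc
      exact hvs p pp pd2 (hA p pp (pd1.trans (A.orderOf_dvd_natCard ha)))
    -- common finishing move, given a subgroup T with a ∈ T, v normalizes T,
    -- and a chain A → T of length n
    have finish : ∀ T : Subgroup G,
        (∃ ct : Fin (n+1) → Subgroup G, ct 0 = A ∧ ct (Fin.last n) = T ∧
          ∀ i : Fin n, SigmaStep σ (ct i.castSucc) (ct i.succ)) →
        a ∈ T → (v * a⁻¹ * v⁻¹ ∈ T) → a * v = v * a := by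
      intro T hchainT haT hconj
      have hwT : v ^ (k - 1) ∈ T := by
        have heq : v ^ (k - 1) = a * (v * a⁻¹ * v⁻¹) := by
          rw [zpow_sub_one, hk]; group
        rw [heq]
        exact T.mul_mem haT hconj
      have hcent_w := ih A T hchainT hA (v ^ (k - 1)) (D.zpow_mem hvD _) hwT
        (fun p pp pd => hvs p pp (pd.trans (orderOf_zpow_dvd' v (k-1)))) a ha
      have hw : a * v ^ (k - 1) * a⁻¹ = v ^ (k - 1) := by
        rw [hcent_w]; group
      exact key_nt hk.symm hw hcop
    rcases htop.2 with hnorm | hprim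
    · -- Y is normal in B
      rw [Subgroup.normal_subgroupOf_iff htop.1] at hnorm
      refine finish Y ⟨c', hc'0, hc'l, hc'step⟩ (hAY ha) ?_
      exact hnorm a⁻¹ v (Y.inv_mem (hAY ha)) hvB
    · -- σ-primary quotient case
      obtain ⟨s₂, hs₂, hps₂⟩ := hprim
      set core := (Y.subgroupOf B).normalCore with hcoredef
      set L := core.map B.subtype with hLdef
      have hLY : L ≤ Y := by
        have h1 : core.map B.subtype ≤ (Y.subgroupOf B).map B.subtype :=
          Subgroup.map_mono (Subgroup.normalCore_le _)
        rw [Subgroup.subgroupOf_map_subtype] at h1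
        exact h1.trans inf_le_left
      have hmem_of : ∀ x : G, x ∈ B → (∀ p, p.Prime → p ∣ orderOf x → p ∉ s₂) → x ∈ L := by
        intro x hx hxp
        set xb : ↥B := ⟨x, hx⟩ with hxbdef
        have h3 : orderOf xb = orderOf x := by
          have := orderOf_injective B.subtype B.subtype_injective xb
          exact this.symm
        have h1 : orderOf ((QuotientGroup.mk' core) xb) ∣ orderOf x := by
          rw [← h3]; exact orderOf_map_dvd _ _
        have h2 : orderOf ((QuotientGroup.mk' core) xb) ∣ Nat.card (↥B ⧸ core) :=
          orderOf_dvd_natCard _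
        have hone : orderOf ((QuotientGroup.mk' core) xb) = 1 := by
          rw [Nat.eq_one_iff_not_exists_prime_dvd]
          intro p pp pd
          exact hxp p pp (pd.trans h1) (hps₂ p pp (pd.trans h2))
        have : xb ∈ core := by
          rw [orderOf_eq_one_iff, QuotientGroup.mk'_apply, QuotientGroup.eq_one_iff] at hone
          exact hone
        exact ⟨xb, this, rfl⟩
      by_cases hss : s₂ = s
      · -- v itself lies in L ≤ Y; recurse directly
        have hvL : v ∈ L := hmem_of v hvB (fun p pp pd => by rw [hss]; exact hvs p pp pd)
        exact ih A Y ⟨c', hc'0, hc'l, hc'step⟩ hA v hvD (hLY hvL) hvs a ha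
      · have hdisj : Disjoint s s₂ := σ.pairwise_disjoint s hs s₂ hs₂ (fun h => hss h.symm)
        have hAL : A ≤ L := by
          intro x hx
          refine hmem_of x (htop.1 (hAY hx)) (fun p pp pd => ?_)
          exact Set.disjoint_left.mp hdisj (hA p pp (pd.trans (A.orderOf_dvd_natCard hx)))
        have hchainL : ∃ ct : Fin (n+1) → Subgroup G, ct 0 = A ∧ ct (Fin.last n) = L ∧
            ∀ i : Fin n, SigmaStep σ (ct i.castSucc) (ct i.succ) :=
          ⟨fun i => c' i ⊓ L, by simp only [hc'0]; exact inf_eq_left.2 hAL,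
            by simp only [hc'l]; exact inf_eq_right.2 hLY,
            fun i => sigmaStep_inf σ _ _ _ (hc'step i)⟩
        refine finish L hchainL (hAL ha) ?_
        -- v normalizes L since core is normal in B and v ∈ B
        obtain ⟨y₀, hy₀, hy₀eq⟩ := hAL (A.inv_mem ha)
        have := (Subgroup.normalCore_normal _).conj_mem y₀ hy₀ ⟨v, hvB⟩
        refine ⟨_, this, ?_⟩
        show v * (y₀ : G) * v⁻¹ = v * a⁻¹ * v⁻¹
        rw [show (y₀ : G) = a⁻¹ from hy₀eq]

/-- Lemma 2.7. -/
theorem lemma27 (σ : SigmaPartition) (G : Type*) [Group G] [Finite G]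
    (hsol : IsSolvable G) (D M : Subgroup G) (hDn : D.Normal)
    (hprod : D ⊔ M = ⊤) (hint : D ⊓ M = ⊥)
    (hres : D = sigmaNilpotentResidual σ G)
    (habel : ∀ a ∈ D, ∀ b ∈ D, a * b = b * a)
    (hhall : Nat.Coprime (Nat.card ↥D) D.index)
    (hodd : Odd (Nat.card ↥D))
    (hMnil : IsSigmaNilpotent σ ↥M) (hMmod : IsModularLattice (Subgroup ↥M))
    (hpower : ∀ g : G, ∀ S : Subgroup G, S ≤ D → ∀ s ∈ S, g * s * g⁻¹ ∈ S)
    (hcompl : ∀ s ∈ σ.blocks, ∃ H : Subgroup G, IsHallSigmaSubgroup s H ∧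
      ∃ K : Subgroup G, K ≤ H ∧ (K.subgroupOf H).Normal ∧
        (sigmaCore s ↥D).map D.subtype ⊔ K = H ∧
        (sigmaCore s ↥D).map D.subtype ⊓ K = ⊥)
    (A : Subgroup G) (hA1 : IsSigmaPrimary σ ↥A) (hA2 : IsSigmaSubnormal σ A)
    (hA3 : A ≤ M) :
    D ≤ Subgroup.centralizer (A : Set G) := by
  classical
  obtain ⟨s, hs, hAcard⟩ := hA1
  intro d hd
  rw [Subgroup.mem_centralizer_iff]
  intro a ha
  obtain ⟨v, w, hvz, hwz, hdvw, hvprimes, hwprimes⟩ := elt_split s d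
  have hvD : v ∈ D := (Subgroup.zpowers_le.2 hd) hvz
  have hwD : w ∈ D := (Subgroup.zpowers_le.2 hd) hwz
  -- part (a): a commutes with v
  obtain ⟨n, c, hc0, hcl, hsteps⟩ := hA2
  have hv_comm : a * v = v * a :=
    cent σ D hpower s hs n A ⊤ ⟨c, hc0, hcl, hsteps⟩ hAcard v hvD (Subgroup.mem_top v)
      hvprimes a ha
  -- part (b): a commutes with w
  obtain ⟨H, hHall, K, hKH, hKnorm, hsup, hinf⟩ := hcompl s hs
  set W : Subgroup G := (sigmaCore s ↥D).map D.subtype with hWdef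
  have hWD : W ≤ D := Subgroup.map_subtype_le _
  have hwW : w ∈ W := by
    set w' : ↥D := ⟨w, hwD⟩ with hw'def
    have hord : orderOf w' = orderOf w := by
      have := orderOf_injective D.subtype D.subtype_injective w'
      exact this.symm
    have hnormal : (Subgroup.zpowers w').Normal := by
      constructor
      intro x hx g
      have hcomm : g * x * g⁻¹ = x := by
        have h := habel (g : G) g.2 (x : G) x.2
        apply Subtype.ext
        show (g : G) * (x : G) * ((g : G))⁻¹ = (x : G)
        rw [h]; group
      rw [hcomm]; exact hx
    have hle : Subgroup.zpowers w' ≤ sigmaCore s ↥D := by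
      apply le_sSup
      refine ⟨hnormal, fun p pp pd => ?_⟩
      rw [Nat.card_zpowers, hord] at pd
      exact hwprimes p pp pd
    exact ⟨w', hle (Subgroup.mem_zpowers w'), rfl⟩
  have hWH : W ≤ H := le_of_le_of_eq le_sup_left hsup
  have hKnorm' : ∀ y ∈ K, ∀ x ∈ H, x * y * x⁻¹ ∈ K := by
    rw [Subgroup.normal_subgroupOf_iff hKH] at hKnorm
    exact fun y hy x hx => hKnorm y x hy hx
  set C := Subgroup.centralizer (W : Set G) with hCdef
  have hKC : K ≤ C := by
    intro y hy
    rw [Subgroup.mem_centralizer_iff]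
    intro x hxW
    have hxH : x ∈ H := hWH hxW
    have h1 : x⁻¹ * y⁻¹ * x ∈ K := by
      have := hKnorm' y⁻¹ (K.inv_mem hy) x⁻¹ (H.inv_mem hxH)
      rwa [inv_inv] at this
    have h2 : y⁻¹ * x * y ∈ W := by
      have := hpower y⁻¹ W hWD x hxW
      rwa [inv_inv] at this
    have hz1 : x⁻¹ * y⁻¹ * x * y ∈ W := by
      have : x⁻¹ * y⁻¹ * x * y = x⁻¹ * (y⁻¹ * x * y) := by group
      rw [this]
      exact W.mul_mem (W.inv_mem hxW) h2
    have hz2 : x⁻¹ * y⁻¹ * x * y ∈ K := K.mul_mem h1 hy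
    have hz : x⁻¹ * y⁻¹ * x * y ∈ W ⊓ K := ⟨hz1, hz2⟩
    rw [hinf, Subgroup.mem_bot] at hz
    have h4 : y⁻¹ * x * y = x * (x⁻¹ * y⁻¹ * x * y) := by group
    rw [hz, mul_one] at h4
    calc x * y = y * (y⁻¹ * x * y) := by group
      _ = y * x := by rw [h4]
  have hDC : D ≤ C := fun x hx => Subgroup.mem_centralizer_iff.2
    (fun z hz => habel z (hWD hz) x hx)
  have hHC : H ≤ C := by
    rw [← hsup]
    exact sup_le (hWD.trans hDC) hKC
  have hCnorm : C.Normal := by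
    constructor
    intro x hx g
    rw [Subgroup.mem_centralizer_iff]
    intro z hz
    have hz' : g⁻¹ * z * g ∈ W := by
      have := hpower g⁻¹ W hWD z hz
      rwa [inv_inv] at this
    have h2 : (g⁻¹ * z * g) * x = x * (g⁻¹ * z * g) :=
      Subgroup.mem_centralizer_iff.1 hx _ hz'
    have h3 := congrArg (fun t => g * t * g⁻¹) h2
    calc z * (g * x * g⁻¹) = g * ((g⁻¹ * z * g) * x) * g⁻¹ := by group
      _ = g * (x * (g⁻¹ * z * g)) * g⁻¹ := by rw [h2]
      _ = (g * x * g⁻¹) * z := by group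
  haveI := hCnorm
  have haC : a ∈ C := by
    have h1 : orderOf ((QuotientGroup.mk' C) a) ∣ orderOf a := orderOf_map_dvd _ _
    have h2 : orderOf ((QuotientGroup.mk' C) a) ∣ C.index := by
      have := orderOf_dvd_natCard ((QuotientGroup.mk' C) a)
      rwa [← Subgroup.index_eq_card] at this
    have h3 : C.index ∣ H.index := Subgroup.index_dvd_of_le hHC
    have hone : orderOf ((QuotientGroup.mk' C) a) = 1 := by
      rw [Nat.eq_one_iff_not_exists_prime_dvd]
      intro p pp pd
      exact hHall.2 p pp ((pd.trans h2).trans h3)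
        (hAcard p pp ((pd.trans h1).trans (A.orderOf_dvd_natCard ha)))
    rw [orderOf_eq_one_iff, QuotientGroup.mk'_apply, QuotientGroup.eq_one_iff] at hone
    exact hone
  have hw_comm : a * w = w * a :=
    (Subgroup.mem_centralizer_iff.1 haC w hwW).symm
  -- combine
  rw [hdvw]
  calc a * (v * w) = (a * v) * w := by rw [mul_assoc]
    _ = v * (a * w) := by rw [hv_comm, mul_assoc]
    _ = v * (w * a) := by rw [hw_comm]
    _ = v * w * a := by rw [mul_assoc]
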